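/- A sequence of integers (ℓ_0, h_1, ℓ_1, …, h_r, ℓ_r) is the profile of a Catalan word if and only if ℓ_0 = 0, ℓ_r = 0, ℓ_i ≥ 0 for 1 ≤ i ≤ r-1, ℓ_{i-1} < h_i for 1 ≤ i ≤ r, and h_i > ℓ_i for 1 ≤ i ≤ r; in that case the unique such word is w = x^{h_1} y^{h_1-ℓ_1} x^{h_2-ℓ_1} y^{h_2-ℓ_2} ⋯ x^{h_r-ℓ_{r-1}} y^{h_r} (exponents with respect to concatenation). -/

import Mathlib

open scoped Classical

inductive Letter | x | y
deriving DecidableEq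

instance : Fintype Letter := ⟨{Letter.x, Letter.y}, fun a => by cases a <;> simp⟩

/-- x ↦ 1, y ↦ -1 -/
def bar : Letter → ℤ
  | .x => 1
  | .y => -1

/-- σ swaps the letters x and y. -/
def sigma : Letter → Letter
  | .x => .y
  | .y => .x

/-- the pairing ⟨u,v⟩ : 2 if u = v, -2 otherwise. -/
def pair : Letter → Letter → ℤ := fun u v => if u = v then 2 else -2

noncomputable section

/-- The free associative algebra on the two letters x, y (with its word basis). -/
abbrev V (F : Type*) [Field F] := MonoidAlgebra F (FreeMonoid Letter)

variable {F : Type*} [Field F]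

/-- the basis word of V corresponding to a list of letters -/
def wd (w : List Letter) : V F := MonoidAlgebra.single (FreeMonoid.ofList w) 1

/-- the q-shuffle product of two words, by the left recursion -/
def shuffleWord (q : F) : List Letter → List Letter → V F
  | [], v => wd v
  | u1 :: ut, [] => wd (u1 :: ut)
  | u1 :: ut, v1 :: vt =>
      wd [u1] * shuffleWord q ut (v1 :: vt)
      + q ^ (((u1 :: ut).map (fun a => pair a v1)).sum) •
          (wd [v1] * shuffleWord q (u1 :: ut) vt)
termination_by u v => u.length + v.length

/-- the q-shuffle product on V, extended bilinearly -/
def shuffle (q : F) (a b : V F) : V F :=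
  a.coeff.sum fun u cu => b.coeff.sum fun v cv =>
    (cu * cv) • shuffleWord q (FreeMonoid.toList u) (FreeMonoid.toList v)

/-- the quantum integer [m]_q -/
def qint (q : F) (m : ℤ) : F := (q ^ m - q ^ (-m)) / (q - q⁻¹)

/-- the quantum factorial [m]_q! -/
def qfac (q : F) (m : ℤ) : F := ∏ j ∈ Finset.range m.toNat, qint q ((j : ℤ) + 1)

/-- e_i = ā_1 + ⋯ + ā_i, the i-th elevation of the word w -/
def esum (w : List Letter) (i : ℕ) : ℤ := ((w.take i).map bar).sum

/-- A word is Catalan when all partial sums of bar are nonnegative and the total is zero. -/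
def IsCatalan (w : List Letter) : Prop :=
  (∀ i, i ≤ w.length → 0 ≤ esum w i) ∧ esum w w.length = 0

/-- the coefficient C(w) = ∏_{i=0}^{2n} [1 + e_i]_q -/
def Ccoef (q : F) (w : List Letter) : F :=
  ∏ i ∈ Finset.range (w.length + 1), qint q (1 + esum w i)

/-- the n-th Catalan element C_n = ∑_{w ∈ Cat_n} C(w) w  -/
def catalanElt (q : F) (n : ℕ) : V F :=
  ∑ f : Fin (2 * n) → Letter,
    if IsCatalan (List.ofFn f) then Ccoef q (List.ofFn f) • wd (List.ofFn f) else 0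

/-- the antiautomorphism ζ : reverse the word and swap x,y, extended linearly -/
def zeta (a : V F) : V F :=
  a.coeff.sum fun w c =>
    MonoidAlgebra.single (FreeMonoid.ofList (((FreeMonoid.toList w).map sigma).reverse)) c

/-- The profile of a word: delete from the elevation sequence every interior e_i
    such that e_{i+1}-e_i and e_i-e_{i-1} have the same sign. -/
def profile (w : List Letter) : List ℤ :=
  (List.range (w.length + 1)).filterMap fun i =>
    if i = 0 ∨ i = w.length then some (esum w i)
    else if 0 < (esum w (i + 1) - esum w i) * (esum w i - esum w (i - 1)) then none
    else some (esum w i)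

/-- The list (ℓ_0, h_1, ℓ_1, h_2, …, h_r, ℓ_r). -/
def P (r : ℕ) (ℓ h : ℕ → ℤ) : List ℤ :=
  List.ofFn fun i : Fin (2 * r + 1) =>
    if i.val % 2 = 0 then ℓ (i.val / 2) else h ((i.val + 1) / 2)

/-- the word x^{h_1} y^{h_1-ℓ_1} x^{h_2-ℓ_1} y^{h_2-ℓ_2} ⋯ x^{h_r-ℓ_{r-1}} y^{h_r} -/
def explicitWord (r : ℕ) (ℓ h : ℕ → ℤ) : List Letter :=
  (List.range r).flatMap fun i =>
    List.replicate (h (i + 1) - ℓ i).toNat Letter.x ++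
      List.replicate (h (i + 1) - ℓ (i + 1)).toNat Letter.y

/-- C(ℓ_0,h_1,…,h_r,ℓ_r), the ratio of q-factorials attached to a profile. -/
def Cprof (q : F) (r : ℕ) (ℓ h : ℕ → ℤ) : F :=
  (∏ i ∈ Finset.Icc 1 r, qfac q (h i) * qfac q (h i + 1)) /
    (∏ i ∈ Finset.range (r + 1), qfac q (ℓ i) * qfac q (ℓ i + 1))

end

section AuxLemmas

lemma esum_nil (i : ℕ) : esum [] i = 0 := by simp [esum]

lemma esum_zero (w : List Letter) : esum w 0 = 0 := by simp [esum]

lemma esum_replicate (c : Letter) (k i : ℕ) :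
    esum (List.replicate k c) i = (min i k : ℕ) * bar c := by
  simp [esum, List.take_replicate, List.map_replicate, List.sum_replicate, nsmul_eq_mul]

lemma esum_append_of_le {u v : List Letter} {i : ℕ} (h : i ≤ u.length) :
    esum (u ++ v) i = esum u i := by
  simp [esum, List.take_append_of_le_length h]

lemma esum_append_of_ge {u v : List Letter} {i : ℕ} (h : u.length ≤ i) :
    esum (u ++ v) i = esum u u.length + esum v (i - u.length) := by
  have : i = u.length + (i - u.length) := by omega
  rw [this, esum]
  rw [List.take_append]
  simp [esum, List.take_length, List.take_of_length_le]

lemma esum_head {w : List Letter} {z : Letter} (h : w.head? = some z) :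
    esum w 1 = bar z := by
  cases w with
  | nil => simp at h
  | cons a t => simp at h; subst h; simp [esum]

end AuxLemmas
section AuxLemmas2

/-- run decomposition -/
lemma run_decomp : ∀ (l : List Letter) (c : Letter), l.head? = some c →
    ∃ a l', 1 ≤ a ∧ l = List.replicate a c ++ l' ∧ l'.head? ≠ some c := by
  intro l
  induction l with
  | nil => intro c hc; simp at hc
  | cons z t ih =>
    intro c hc
    simp at hc; subst hc
    by_cases ht : t.head? = some z
    · obtain ⟨a, l', ha, hl, hh⟩ := ih z ht
      exact ⟨a + 1, l', by omega, by simp [List.replicate_succ, hl], hh⟩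
    · exact ⟨1, t, le_refl _, by simp [List.replicate_succ], ht⟩

lemma profile_nil : profile [] = [0] := by
  simp [profile, esum, List.range_succ]

lemma profile_ne_nil_form {v : List Letter} (hv : v ≠ []) :
    ∃ t, profile v = 0 :: t ++ [esum v v.length] := by
  obtain ⟨m, hm⟩ : ∃ m, v.length = m + 1 := by
    cases v with
    | nil => simp at hv
    | cons a t => exact ⟨t.length, by simp⟩
  set f : ℕ → Option ℤ := fun i =>
    if i = 0 ∨ i = v.length then some (esum v i)
    else if 0 < (esum v (i + 1) - esum v i) * (esum v i - esum v (i - 1)) then none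
    else some (esum v i) with hf
  have h0 : f 0 = some 0 := by simp [hf, esum_zero]
  have hn : f v.length = some (esum v v.length) := by simp [hf]
  have : profile v = List.filterMap f (List.range (v.length + 1)) := rfl
  rw [this, List.range_succ, List.filterMap_append]
  rw [show List.filterMap f [v.length] = [esum v v.length] by
    simp only [List.filterMap_cons, hn, List.filterMap_nil]]
  rw [hm, List.range_succ_eq_map, List.filterMap_cons_some (b := (0:ℤ)) h0]
  exact ⟨List.filterMap f (List.map Nat.succ (List.range m)), rfl⟩

end AuxLemmas2
section AuxLemmas3

lemma P_length (r : ℕ) (ℓ h : ℕ → ℤ) : (P r ℓ h).length = 2*r+1 := by simp [P]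

lemma P_cons (r : ℕ) (ℓ h : ℕ → ℤ) : P r ℓ h = ℓ 0 :: (P r ℓ h).tail := by
  conv_lhs => rw [P, List.ofFn_succ]
  conv_rhs => rw [P, List.ofFn_succ]
  simp

lemma P_zero (ℓ h : ℕ → ℤ) : P 0 ℓ h = [ℓ 0] := by
  rw [P, List.ofFn_succ]
  simp

lemma P_succ (r : ℕ) (ℓ h : ℕ → ℤ) :
    P (r+1) ℓ h = ℓ 0 :: h 1 :: P r (fun i => ℓ (i+1)) (fun i => h (i+1)) := by
  apply List.ext_getElem
  · simp only [P, List.length_ofFn, List.length_cons]; omega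
  · intro i h1 h2
    simp only [P, List.getElem_ofFn]
    match i with
    | 0 => norm_num
    | 1 => norm_num
    | (j+2) =>
      simp only [List.getElem_cons_succ, List.getElem_ofFn]
      have e1 : (j+2) % 2 = j % 2 := by omega
      rcases Nat.mod_two_eq_zero_or_one j with hj | hj
      · rw [if_pos (by omega), if_pos (by omega)]
        congr 1; omega
      · rw [if_neg (by omega), if_neg (by omega)]
        congr 1; omega

lemma P_map (c : ℤ) (r : ℕ) (ℓ h : ℕ → ℤ) :
    (P r ℓ h).map (fun t => c + t) = P r (fun i => c + ℓ i) (fun i => c + h i) := by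
  rw [P, P, List.map_ofFn]
  congr 1
  funext i
  by_cases hi : i.val % 2 = 0 <;> simp [Function.comp, hi]

lemma explicitWord_zero (ℓ h : ℕ → ℤ) : explicitWord 0 ℓ h = [] := by
  simp [explicitWord]

lemma explicitWord_succ (r : ℕ) (ℓ h : ℕ → ℤ) :
    explicitWord (r+1) ℓ h =
      List.replicate (h 1 - ℓ 0).toNat Letter.x ++
        (List.replicate (h 1 - ℓ 1).toNat Letter.y ++
          explicitWord r (fun i => ℓ (i+1)) (fun i => h (i+1))) := by
  rw [explicitWord, List.range_succ_eq_map, List.flatMap_cons, ← List.append_assoc]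
  congr 1
  rw [List.flatMap_map]
  rfl

end AuxLemmas3
section AuxLemmas4

variable (a b : ℕ) (u : List Letter)

lemma ev_len : (List.replicate a Letter.x ++ (List.replicate b Letter.y ++ u)).length
    = a + b + u.length := by simp; omega

lemma ev1 {i : ℕ} (hi : i ≤ a) :
    esum (List.replicate a Letter.x ++ (List.replicate b Letter.y ++ u)) i = (i:ℤ) := by
  rw [esum_append_of_le (by simpa using hi), esum_replicate]
  simp [Nat.min_eq_left hi, bar]

lemma ev2 {i : ℕ} (h1 : a ≤ i) (h2 : i ≤ a + b) :
    esum (List.replicate a Letter.x ++ (List.replicate b Letter.y ++ u)) i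
      = 2*(a:ℤ) - i := by
  rw [esum_append_of_ge (by simpa using h1)]
  simp only [List.length_replicate]
  rw [esum_append_of_le (by simp; omega)]
  rw [esum_replicate, esum_replicate]
  simp only [min_self, Nat.min_eq_left (show i - a ≤ b by omega), bar]
  push_cast [h1]
  ring

lemma ev3 {i : ℕ} (h1 : a + b ≤ i) :
    esum (List.replicate a Letter.x ++ (List.replicate b Letter.y ++ u)) i
      = (a:ℤ) - b + esum u (i - (a+b)) := by
  rw [esum_append_of_ge (by simp; omega)]
  simp only [List.length_replicate]
  rw [esum_append_of_ge (by simp; omega)]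
  simp only [List.length_replicate]
  rw [esum_replicate, esum_replicate]
  simp only [min_self, bar, Nat.sub_sub]
  ring

end AuxLemmas4
section AuxLemmas5

def pf (w : List Letter) (i : ℕ) : Option ℤ :=
  if i = 0 ∨ i = w.length then some (esum w i)
  else if 0 < (esum w (i + 1) - esum w i) * (esum w i - esum w (i - 1)) then none
  else some (esum w i)

lemma profile_eq (w : List Letter) :
    profile w = (List.range (w.length + 1)).filterMap (pf w) := rfl

lemma pf_zero (w : List Letter) : pf w 0 = some 0 := by
  rw [pf, if_pos (Or.inl rfl), esum_zero]

lemma pf_len (w : List Letter) : pf w w.length = some (esum w w.length) := by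
  rw [pf, if_pos (Or.inr rfl)]

lemma pf_of_ne (w : List Letter) (i : ℕ) (h0 : i ≠ 0) (hl : i ≠ w.length) :
    pf w i = if 0 < (esum w (i + 1) - esum w i) * (esum w i - esum w (i - 1)) then none
      else some (esum w i) := by
  rw [pf, if_neg (by tauto)]

lemma profile_decomp (a b : ℕ) (u : List Letter) (ha : 1 ≤ a) (hb : 1 ≤ b)
    (hu : u = [] ∨ u.head? = some Letter.x) :
    profile (List.replicate a Letter.x ++ (List.replicate b Letter.y ++ u)) =
      0 :: (a:ℤ) :: (profile u).map (fun t => ((a:ℤ) - (b:ℤ)) + t) := by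
  set v := List.replicate a Letter.x ++ (List.replicate b Letter.y ++ u) with hv
  set n := u.length with hn
  have hlen : v.length = a + b + n := by rw [hv, ev_len, hn]
  have hev1 : ∀ i : ℕ, i ≤ a → esum v i = (i:ℤ) := fun i hi => by
    rw [hv]; exact ev1 a b u hi
  have hev2 : ∀ i : ℕ, a ≤ i → i ≤ a + b → esum v i = 2*(a:ℤ) - i := fun i h1 h2 => by
    rw [hv]; exact ev2 a b u h1 h2
  have hev3 : ∀ i : ℕ, a + b ≤ i → esum v i = (a:ℤ) - (b:ℤ) + esum u (i - (a+b)) :=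
    fun i h1 => by rw [hv]; exact ev3 a b u h1
  have hsplit : List.range (v.length + 1)
      = List.range (a+b) ++ List.map (fun x => (a+b) + x) (List.range (n+1)) := by
    rw [show v.length + 1 = (a+b) + (n+1) by omega, List.range_add]
  rw [profile_eq, hsplit, List.filterMap_append]
  have hA : List.filterMap (pf v) (List.range (a+b)) = [0, (a:ℤ)] := by
    rw [List.range_add, List.filterMap_append]
    have h1 : List.filterMap (pf v) (List.range a) = [0] := by
      rw [show a = (a-1) + 1 by omega, List.range_succ_eq_map]
      rw [List.filterMap_cons_some (pf_zero v)]
      rw [List.filterMap_map, List.filterMap_eq_nil_iff.mpr ?_]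
      intro k hk
      simp only [List.mem_range] at hk
      show pf v (k+1) = none
      rw [pf_of_ne v (k+1) (by omega) (by omega), if_pos ?_]
      rw [hev1 (k+1+1) (by omega), hev1 (k+1) (by omega), show k+1-1 = k by omega,
        hev1 k (by omega)]
      push_cast
      nlinarith
    have h2 : List.filterMap (pf v) (List.map (fun x => a + x) (List.range b)) = [(a:ℤ)] := by
      rw [show b = (b-1) + 1 by omega, List.range_succ_eq_map, List.map_cons]
      rw [List.filterMap_cons_some (show pf v (a + 0) = some (a:ℤ) by
        rw [show a + 0 = a from rfl, pf_of_ne v a (by omega) (by omega), if_neg ?_,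
          hev1 a le_rfl]
        rw [hev2 (a+1) (by omega) (by omega), hev1 a le_rfl, show a - 1 = a - 1 from rfl,
          hev1 (a-1) (by omega)]
        push_cast [ha]
        nlinarith)]
      rw [List.map_map, List.filterMap_map, List.filterMap_eq_nil_iff.mpr ?_]
      intro k hk
      simp only [List.mem_range] at hk
      show pf v (a + (k+1)) = none
      rw [pf_of_ne v (a + (k+1)) (by omega) (by omega), if_pos ?_]
      rw [show a + (k+1) + 1 = a + (k+2) from rfl, hev2 (a+(k+2)) (by omega) (by omega),
        hev2 (a+(k+1)) (by omega) (by omega), show a + (k+1) - 1 = a + k by omega,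
        hev2 (a+k) (by omega) (by omega)]
      push_cast
      nlinarith
    rw [h1, h2]
    rfl
  have hB : List.filterMap (pf v) (List.map (fun x => (a+b) + x) (List.range (n+1)))
      = (profile u).map (fun t => ((a:ℤ) - (b:ℤ)) + t) := by
    rw [List.filterMap_map, profile_eq u, List.map_filterMap, ← hn]
    apply List.filterMap_congr
    intro j hj
    simp only [List.mem_range] at hj
    show pf v ((a+b) + j) = Option.map (fun t => ((a:ℤ) - (b:ℤ)) + t) (pf u j)
    by_cases hj0 : j = 0
    · subst hj0
      rw [show (a+b) + 0 = a + b from rfl, show pf u 0 = some 0 from pf_zero u]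
      by_cases hn0 : n = 0
      · rw [show a + b = v.length by omega, pf_len v, hlen,
          hev2 (a+b+n) (by omega) (by omega)]
        simp only [Option.map_some]
        congr 1
        push_cast [hn0]
        omega
      · have hux : u.head? = some Letter.x := by
          rcases hu with h | h
          · exfalso; rw [h] at hn; simp at hn; omega
          · exact h
        rw [pf_of_ne v (a+b) (by omega) (by omega), if_neg ?_]
        · rw [hev2 (a+b) (by omega) (by omega)]
          simp only [Option.map_some]
          congr 1
          push_cast
          ring
        · rw [hev3 (a+b+1) (by omega), show a + b + 1 - (a+b) = 1 by omega, esum_head hux,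
            hev2 (a+b) (by omega) (by omega), show a + b - 1 = a + (b-1) by omega,
            hev2 (a+(b-1)) (by omega) (by omega)]
          simp only [bar]
          push_cast [hb]
          nlinarith
    · by_cases hjn : j = n
      · subst hjn
        rw [show (a+b) + n = v.length by omega, pf_len v, show n = u.length from hn, pf_len u,
          ← hn, hlen, hev3 (a+b+n) (by omega), show a + b + n - (a+b) = n by omega]
        simp only [Option.map_some]
      · have e1 : esum v ((a+b) + j + 1) = (a:ℤ) - (b:ℤ) + esum u (j+1) := by
          rw [hev3 ((a+b) + j + 1) (by omega), show (a+b) + j + 1 - (a+b) = j + 1 by omega]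
        have e2 : esum v ((a+b) + j) = (a:ℤ) - (b:ℤ) + esum u j := by
          rw [hev3 ((a+b) + j) (by omega), show (a+b) + j - (a+b) = j by omega]
        have e3 : esum v ((a+b) + j - 1) = (a:ℤ) - (b:ℤ) + esum u (j-1) := by
          rw [hev3 ((a+b) + j - 1) (by omega), show (a+b) + j - 1 - (a+b) = j - 1 by omega]
        rw [pf_of_ne v ((a+b)+j) (by omega) (by omega), pf_of_ne u j hj0 (by omega),
          e1, e2, e3]
        rw [show ((a:ℤ) - (b:ℤ) + esum u (j+1) - ((a:ℤ) - (b:ℤ) + esum u j)) *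
            ((a:ℤ) - (b:ℤ) + esum u j - ((a:ℤ) - (b:ℤ) + esum u (j-1)))
            = (esum u (j+1) - esum u j) * (esum u j - esum u (j-1)) from by ring]
        split_ifs with hc
        · rfl
        · simp only [Option.map_some]
  rw [hA, hB]
  rfl

end AuxLemmas5
section MainInduction

def HeadOK (v : List Letter) : Prop := v = [] ∨ v.head? = some Letter.x

lemma profile_cons (u : List Letter) : ∃ t0, profile u = 0 :: t0 := by
  rcases eq_or_ne u [] with h | h
  · exact ⟨[], by rw [h, profile_nil]⟩
  · obtain ⟨t, ht⟩ := profile_ne_nil_form h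
    exact ⟨t ++ [esum u u.length], ht⟩

lemma replicate_append_head {a : ℕ} (c : Letter) (l : List Letter) (ha : 1 ≤ a) :
    (List.replicate a c ++ l).head? = some c := by
  obtain ⟨a', rfl⟩ : ∃ a', a = a' + 1 := ⟨a - 1, by omega⟩
  simp [List.replicate_succ]

lemma gen (r : ℕ) : ∀ (ℓ h : ℕ → ℤ),
    ((∃ v, HeadOK v ∧ (∀ i, i ≤ v.length → 0 ≤ ℓ 0 + esum v i) ∧ ℓ 0 + esum v v.length = 0 ∧
        (profile v).map (fun t => ℓ 0 + t) = P r ℓ h) ↔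
      (0 ≤ ℓ 0 ∧ (∀ i, 1 ≤ i → i + 1 ≤ r → 0 ≤ ℓ i) ∧ ℓ r = 0 ∧
        (∀ i, 1 ≤ i → i ≤ r → ℓ (i - 1) < h i) ∧ (∀ i, 1 ≤ i → i ≤ r → ℓ i < h i)))
    ∧ ∀ v, HeadOK v → (∀ i, i ≤ v.length → 0 ≤ ℓ 0 + esum v i) → ℓ 0 + esum v v.length = 0 →
        (profile v).map (fun t => ℓ 0 + t) = P r ℓ h → v = explicitWord r ℓ h := by
  induction r with
  | zero =>
    intro ℓ h
    have empt : ∀ v : List Letter, (profile v).map (fun t => ℓ 0 + t) = P 0 ℓ h → v = [] := by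
      intro v hmap
      by_contra hne
      obtain ⟨t, ht⟩ := profile_ne_nil_form hne
      have hlen := congrArg List.length hmap
      rw [ht, P_length] at hlen
      simp at hlen
    constructor
    · constructor
      · rintro ⟨v, _, _, hend, hmap⟩
        have hv := empt v hmap
        rw [hv, esum_nil] at hend
        refine ⟨by omega, by intro i h1 h2; omega, by omega, ?_, ?_⟩ <;>
          (intro i h1 h2; omega)
      · rintro ⟨h0, _, hr, _, _⟩
        refine ⟨[], Or.inl rfl, ?_, ?_, ?_⟩
        · intro i _; rw [esum_nil]; omega
        · rw [esum_nil]; omega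
        · rw [profile_nil, P_zero]; simp
    · intro v _ _ _ hmap
      rw [empt v hmap, explicitWord_zero]
  | succ r ih =>
    intro ℓ h
    set ℓ' : ℕ → ℤ := fun i => ℓ (i+1) with hℓ'
    set h' : ℕ → ℤ := fun i => h (i+1) with hh'
    have hl'0 : ℓ' 0 = ℓ 1 := rfl
    have hl'r : ℓ' r = ℓ (r+1) := rfl
    have key : ∀ v : List Letter, HeadOK v →
        (∀ i, i ≤ v.length → 0 ≤ ℓ 0 + esum v i) → ℓ 0 + esum v v.length = 0 →
        (profile v).map (fun t => ℓ 0 + t) = P (r+1) ℓ h →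
        ∃ (a b : ℕ) (u : List Letter), 1 ≤ a ∧ 1 ≤ b ∧
          v = List.replicate a Letter.x ++ (List.replicate b Letter.y ++ u) ∧
          HeadOK u ∧ ℓ 0 + (a:ℤ) = h 1 ∧ ℓ 0 + (a:ℤ) - (b:ℤ) = ℓ 1 ∧
          (∀ j, j ≤ u.length → 0 ≤ ℓ' 0 + esum u j) ∧ ℓ' 0 + esum u u.length = 0 ∧
          (profile u).map (fun t => ℓ' 0 + t) = P r ℓ' h' := by
      intro v hhead hpos hend hmap
      have hpos0 : 0 ≤ ℓ 0 := by simpa [esum_zero] using hpos 0 (Nat.zero_le _)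
      have hvne : v ≠ [] := by
        intro hv
        rw [hv, profile_nil] at hmap
        have hlen := congrArg List.length hmap
        rw [P_length] at hlen
        simp at hlen
      have hvx : v.head? = some Letter.x := by
        rcases hhead with hh | hh
        · exact absurd hh hvne
        · exact hh
      obtain ⟨a, l', ha, hvl, hl'⟩ := run_decomp v Letter.x hvx
      have hl'ne : l' ≠ [] := by
        intro hnil
        rw [hnil, List.append_nil] at hvl
        rw [hvl, esum_replicate] at hend
        simp [bar] at hend
        omega
      have hl'y : l'.head? = some Letter.y := by
        cases l' with
        | nil => exact absurd rfl hl'ne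
        | cons z t =>
          cases z
          · exact absurd rfl hl'
          · rfl
      obtain ⟨b, u, hb, hl'u, hu'⟩ := run_decomp l' Letter.y hl'y
      have huOK : HeadOK u := by
        cases u with
        | nil => exact Or.inl rfl
        | cons z t =>
          cases z
          · exact Or.inr rfl
          · exact absurd rfl hu'
      have hveq : v = List.replicate a Letter.x ++ (List.replicate b Letter.y ++ u) := by
        rw [hvl, hl'u]
      have hL : v.length = a + b + u.length := by rw [hveq, ev_len]
      rw [hveq, profile_decomp a b u ha hb huOK, P_succ, ← hℓ', ← hh'] at hmap
      simp only [List.map_cons, List.map_map] at hmap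
      rw [List.cons.injEq, List.cons.injEq] at hmap
      obtain ⟨-, e1, e2⟩ := hmap
      obtain ⟨t0, ht0⟩ := profile_cons u
      have hl1 : ℓ 0 + (a:ℤ) - (b:ℤ) = ℓ 1 := by
        have e2h := congrArg List.head? e2
        rw [ht0, P_cons r ℓ' h'] at e2h
        simp only [List.map_cons, List.head?_cons, Option.some.injEq,
          Function.comp_apply] at e2h
        rw [hl'0] at e2h
        linarith [e2h]
      have hfun : (fun t => ℓ' 0 + t) =
          ((fun t => ℓ 0 + t) ∘ (fun t => ((a:ℤ) - (b:ℤ)) + t)) := by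
        funext t
        simp only [Function.comp_apply, hl'0]
        linarith [hl1]
      have e2' : (profile u).map (fun t => ℓ' 0 + t) = P r ℓ' h' := by
        rw [hfun]
        exact e2
      have upos : ∀ j, j ≤ u.length → 0 ≤ ℓ' 0 + esum u j := by
        intro j hj
        have h2 := hpos (a+b+j) (by omega)
        rw [hveq, ev3 a b u (by omega), show a+b+j-(a+b) = j by omega] at h2
        rw [hl'0]
        linarith [h2, hl1]
      have uend : ℓ' 0 + esum u u.length = 0 := by
        rw [hL, hveq, ev3 a b u (by omega), show a+b+u.length-(a+b) = u.length by omega]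
          at hend
        rw [hl'0]
        linarith [hend, hl1]
      exact ⟨a, b, u, ha, hb, hveq, huOK, e1, hl1, upos, uend, e2'⟩
    constructor
    · constructor
      · rintro ⟨v, hhead, hpos, hend, hmap⟩
        have hpos0 : 0 ≤ ℓ 0 := by simpa [esum_zero] using hpos 0 (Nat.zero_le _)
        obtain ⟨a, b, u, ha, hb, hveq, huOK, e1, hl1, upos, uend, e2'⟩ :=
          key v hhead hpos hend hmap
        obtain ⟨c0, cint, crr, cs1, cs2⟩ := (ih ℓ' h').1.mp ⟨u, huOK, upos, uend, e2'⟩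
        rw [hl'0] at c0
        have ha' : (1:ℤ) ≤ (a:ℤ) := by exact_mod_cast ha
        have hb' : (1:ℤ) ≤ (b:ℤ) := by exact_mod_cast hb
        refine ⟨hpos0, ?_, ?_, ?_, ?_⟩
        · intro i h1 h2
          rcases Nat.eq_or_lt_of_le h1 with h1' | h1'
          · rw [← h1']; exact c0
          · have hc := cint (i-1) (by omega) (by omega)
            have heq : ℓ' (i-1) = ℓ i := by
              simp only [hℓ']
              congr 1
              omega
            rwa [heq] at hc
        · rwa [hl'r] at crr
        · intro i h1 h2
          rcases Nat.eq_or_lt_of_le h1 with h1' | h1'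
          · rw [← h1']
            show ℓ (1-1) < h 1
            rw [show (1:ℕ)-1 = 0 from rfl]
            linarith [e1]
          · have hc := cs1 (i-1) (by omega) (by omega)
            have heq1 : ℓ' (i-1-1) = ℓ (i-1) := by
              simp only [hℓ']
              congr 1
              omega
            have heq2 : h' (i-1) = h i := by
              simp only [hh']
              congr 1
              omega
            rwa [heq1, heq2] at hc
        · intro i h1 h2
          rcases Nat.eq_or_lt_of_le h1 with h1' | h1'
          · rw [← h1']
            linarith [e1, hl1]
          · have hc := cs2 (i-1) (by omega) (by omega)
            have heq1 : ℓ' (i-1) = ℓ i := by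
              simp only [hℓ']
              congr 1
              omega
            have heq2 : h' (i-1) = h i := by
              simp only [hh']
              congr 1
              omega
            rwa [heq1, heq2] at hc
      · rintro ⟨h0, hint, hrr, hs1, hs2⟩
        have hl0h1 : ℓ 0 < h 1 := by
          have := hs1 1 le_rfl (by omega)
          rwa [show (1:ℕ)-1 = 0 from rfl] at this
        have hl1h1 : ℓ 1 < h 1 := hs2 1 le_rfl (by omega)
        have hl1nn : 0 ≤ ℓ 1 := by
          rcases Nat.eq_zero_or_pos r with hr | hr
          · have h1 : ℓ 1 = 0 := by rw [show (1:ℕ) = r + 1 by omega]; exact hrr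
            omega
          · exact hint 1 le_rfl (by omega)
        have ccond : (0 ≤ ℓ' 0 ∧ (∀ i, 1 ≤ i → i + 1 ≤ r → 0 ≤ ℓ' i) ∧ ℓ' r = 0 ∧
            (∀ i, 1 ≤ i → i ≤ r → ℓ' (i - 1) < h' i) ∧
            (∀ i, 1 ≤ i → i ≤ r → ℓ' i < h' i)) := by
          refine ⟨by rw [hl'0]; exact hl1nn, ?_, by rw [hl'r]; exact hrr, ?_, ?_⟩
          · intro i hi1 hi2
            have := hint (i+1) (by omega) (by omega)
            simpa [hℓ'] using this
          · intro i hi1 hi2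
            have hc := hs1 (i+1) (by omega) (by omega)
            rw [show i+1-1 = i by omega] at hc
            have heq1 : ℓ' (i-1) = ℓ i := by
              simp only [hℓ']
              congr 1
              omega
            have heq2 : h' i = h (i+1) := rfl
            rw [heq1, heq2]
            exact hc
          · intro i hi1 hi2
            have hc := hs2 (i+1) (by omega) (by omega)
            have heq1 : ℓ' i = ℓ (i+1) := rfl
            have heq2 : h' i = h (i+1) := rfl
            rw [heq1, heq2]
            exact hc
        obtain ⟨u, huOK, upos, uend, umap⟩ := (ih ℓ' h').1.mpr ccond
        set a := (h 1 - ℓ 0).toNat with hadef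
        set b := (h 1 - ℓ 1).toNat with hbdef
        have hacast : (a:ℤ) = h 1 - ℓ 0 := by omega
        have hbcast : (b:ℤ) = h 1 - ℓ 1 := by omega
        have ha : 1 ≤ a := by omega
        have hb : 1 ≤ b := by omega
        refine ⟨List.replicate a Letter.x ++ (List.replicate b Letter.y ++ u),
          Or.inr (replicate_append_head _ _ ha), ?_, ?_, ?_⟩
        · intro i hi
          rw [ev_len] at hi
          rcases le_or_gt i a with hia | hia
          · rw [ev1 a b u hia]
            have : (0:ℤ) ≤ (i:ℤ) := Int.natCast_nonneg i
            linarith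
          · rcases le_or_gt i (a+b) with hib | hib
            · rw [ev2 a b u (by omega) hib]
              have : (i:ℤ) ≤ (a:ℤ) + (b:ℤ) := by exact_mod_cast hib
              linarith
            · rw [ev3 a b u (by omega)]
              have hu := upos (i-(a+b)) (by omega)
              rw [hl'0] at hu
              linarith
        · rw [ev_len, ev3 a b u (by omega), show a+b+u.length - (a+b) = u.length by omega]
          rw [hl'0] at uend
          linarith
        · rw [profile_decomp a b u ha hb huOK, P_succ, ← hℓ', ← hh']
          simp only [List.map_cons, List.map_map]
          congr 1
          · ring
          congr 1
          · linarith
          · have hfun : ((fun t => ℓ 0 + t) ∘ (fun t => ((a:ℤ) - (b:ℤ)) + t)) =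
                (fun t => ℓ' 0 + t) := by
              funext t
              simp only [Function.comp_apply, hl'0]
              linarith
            rw [hfun]
            exact umap
    · intro v hhead hpos hend hmap
      obtain ⟨a, b, u, ha, hb, hveq, huOK, e1, hl1, upos, uend, e2'⟩ :=
        key v hhead hpos hend hmap
      have hu := (ih ℓ' h').2 u huOK upos uend e2'
      rw [explicitWord_succ, ← hℓ', ← hh', ← hu, hveq]
      have haa : a = (h 1 - ℓ 0).toNat := by omega
      have hbb : b = (h 1 - ℓ 1).toNat := by omega
      rw [← haa, ← hbb]

end MainInduction

lemma catalan_headOK {w : List Letter} (hw : IsCatalan w) : HeadOK w := by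
  cases w with
  | nil => exact Or.inl rfl
  | cons z t =>
    right
    have h1 := hw.1 1 (by simp)
    cases z
    · rfl
    · exfalso
      rw [esum_head (show (Letter.y :: t).head? = some Letter.y from rfl)] at h1
      simp [bar] at h1

lemma profile_P_l0 {w : List Letter} {r : ℕ} {ℓ h : ℕ → ℤ}
    (hp : profile w = P r ℓ h) : ℓ 0 = 0 := by
  obtain ⟨t0, ht0⟩ := profile_cons w
  rw [ht0, P_cons r ℓ h, List.cons.injEq] at hp
  exact hp.1.symm

lemma map_zero_add (l : List ℤ) : l.map (fun t => (0:ℤ) + t) = l := by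
  simp

theorem stmt13' (r : ℕ) (ℓ h : ℕ → ℤ) :
    ((∃ w, IsCatalan w ∧ profile w = P r ℓ h) ↔
      (ℓ 0 = 0 ∧ (∀ i, 1 ≤ i → i + 1 ≤ r → 0 ≤ ℓ i) ∧ ℓ r = 0 ∧
        (∀ i, 1 ≤ i → i ≤ r → ℓ (i - 1) < h i) ∧ (∀ i, 1 ≤ i → i ≤ r → ℓ i < h i)))
    ∧ ∀ w, IsCatalan w → profile w = P r ℓ h → w = explicitWord r ℓ h := by
  constructor
  · constructor
    · rintro ⟨w, hw, hprof⟩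
      have hl0 : ℓ 0 = 0 := profile_P_l0 hprof
      have hmap : (profile w).map (fun t => ℓ 0 + t) = P r ℓ h := by
        rw [hl0, map_zero_add]
        exact hprof
      have hx := (gen r ℓ h).1.mp ⟨w, catalan_headOK hw,
        fun i hi => by rw [hl0, zero_add]; exact hw.1 i hi,
        by rw [hl0, zero_add]; exact hw.2, hmap⟩
      exact ⟨hl0, hx.2.1, hx.2.2.1, hx.2.2.2.1, hx.2.2.2.2⟩
    · rintro ⟨hl0, hint, hlr, hs1, hs2⟩
      obtain ⟨v, hOK, hpos, hend, hmap⟩ := (gen r ℓ h).1.mpr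
        ⟨by rw [hl0], hint, hlr, hs1, hs2⟩
      refine ⟨v, ⟨fun i hi => by have := hpos i hi; rw [hl0, zero_add] at this; exact this,
        by have := hend; rw [hl0, zero_add] at this; exact this⟩, ?_⟩
      rw [← hmap, hl0, map_zero_add]
  · intro w hw hprof
    have hl0 : ℓ 0 = 0 := profile_P_l0 hprof
    have hmap : (profile w).map (fun t => ℓ 0 + t) = P r ℓ h := by
      rw [hl0, map_zero_add]
      exact hprof
    exact (gen r ℓ h).2 w (catalan_headOK hw)
      (fun i hi => by rw [hl0, zero_add]; exact hw.1 i hi)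
      (by rw [hl0, zero_add]; exact hw.2) hmap


theorem stmt13 (r : ℕ) (ℓ h : ℕ → ℤ) :
    ((∃ w, IsCatalan w ∧ profile w = P r ℓ h) ↔
      (ℓ 0 = 0 ∧ (∀ i, 1 ≤ i → i + 1 ≤ r → 0 ≤ ℓ i) ∧ ℓ r = 0 ∧
        (∀ i, 1 ≤ i → i ≤ r → ℓ (i - 1) < h i) ∧ (∀ i, 1 ≤ i → i ≤ r → ℓ i < h i)))
    ∧ ∀ w, IsCatalan w → profile w = P r ℓ h → w = explicitWord r ℓ h :=
  stmt13' r ℓ h
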